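/- In the setting of the Dehornoy-type inductive limit (functions k, l : ℤ → ℤ with k(n), l(n) ≥ 2, presented group G̃ with generators gₙ (n ∈ ℤ) and relations g_{n-1}^{k(n)} = g_n^{l(n)}, elements a_{i,m}, and subsemigroup P̃ generated by all a_{i,m}), the following memberships hold: (i) for every n ∈ ℤ, gₙ ∈ P̃ and gₙ⁻¹ · g_{n+1} ∈ P̃; (ii) for every m ≥ 0 and every i with -m ≤ i ≤ m-1, a_{i+1,m}⁻¹ · a_{i,m} ∈ P̃; (iii) for every m ≥ 0 and every i with -m ≤ i ≤ m, a_{i,m+1}⁻¹ · a_{i,m} ∈ P̃. (In the left ordering determined by P̃ these say 1 < gₙ < g_{n+1}, a_{i+1,m} < a_{i,m}, and a_{i,m+1} < a_{i,m}.) -/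

import Mathlib

/-- The relators `g_{n-1}^{k n} * g_n^{-(l n)}` of the Dehornoy-type inductive limit. -/
def dehornoyRels (k l : ℤ → ℤ) : Set (FreeGroup ℤ) :=
  {r | ∃ n : ℤ, r = FreeGroup.of (n - 1) ^ k n * FreeGroup.of n ^ (-(l n))}

/-- The presented group `G̃` with generators `gₙ (n : ℤ)` and relations
`g_{n-1}^{k n} = g_n^{l n}`. -/
abbrev Gtil (k l : ℤ → ℤ) : Type := PresentedGroup (dehornoyRels k l)

/-- The image `gₙ` in `G̃` of the `n`-th generator. -/
def gg (k l : ℤ → ℤ) (n : ℤ) : Gtil k l := PresentedGroup.of n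

/-- The element `a_{i,m} = g_{-m}^{-(k(-m+1)-1)} ⋯ g_{i-1}^{-(k i - 1)} * g_i` of `G̃`. -/
def aElt (k l : ℤ → ℤ) (i m : ℤ) : Gtil k l :=
  (((List.range (i + m).toNat).map
      (fun t => gg k l (-m + (t : ℤ)) ^ (-(k (-m + (t : ℤ) + 1) - 1)))).prod) * gg k l i

/-- The generating set `{a_{i,m} : m ≥ 0, -m ≤ i ≤ m}` of the positive cone. -/
def aGenSet (k l : ℤ → ℤ) : Set (Gtil k l) :=
  {x | ∃ m i : ℤ, 0 ≤ m ∧ -m ≤ i ∧ i ≤ m ∧ x = aElt k l i m}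

/-- The subsemigroup `P̃` of `G̃` generated by the `a_{i,m}`, viewed as a set. -/
def Ptil (k l : ℤ → ℤ) : Set (Gtil k l) :=
  (Subsemigroup.closure (aGenSet k l) : Subsemigroup (Gtil k l))

/-- The subgroup `G_(m)` of `G̃` generated by `g_{-m}, …, g_m`. -/
def Gsub (k l : ℤ → ℤ) (m : ℤ) : Subgroup (Gtil k l) :=
  Subgroup.closure {x | ∃ j : ℤ, -m ≤ j ∧ j ≤ m ∧ x = gg k l j}

/-- `P` is a positive cone of the group `G`: it is closed under multiplication and
`G` is the disjoint union of `P`, `P⁻¹` and `{1}`. -/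
def IsPositiveCone {G : Type*} [Group G] (P : Set G) : Prop :=
  (∀ a ∈ P, ∀ b ∈ P, a * b ∈ P) ∧
  (∀ g : G, g ∈ P ∨ g⁻¹ ∈ P ∨ g = 1) ∧
  (∀ g ∈ P, g⁻¹ ∉ P) ∧ (1 : G) ∉ P

/-- `C` is a subgroup of `H` which is convex with respect to the set `Q`
(a positive cone of `H`): whenever `c₁, c₂ ∈ C` and `g ∈ H` satisfy
`c₁⁻¹ * g ∈ Q ∪ {1}` and `g⁻¹ * c₂ ∈ Q ∪ {1}`, then `g ∈ C`. -/
def IsConvexIn {G : Type*} [Group G] (H : Subgroup G) (Q : Set G) (C : Subgroup G) : Prop :=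
  C ≤ H ∧ ∀ c₁ ∈ C, ∀ c₂ ∈ C, ∀ g ∈ H,
    c₁⁻¹ * g ∈ Q ∪ {1} → g⁻¹ * c₂ ∈ Q ∪ {1} → g ∈ C

/-! ### Auxiliary material for the proof -/

namespace DehornoyAux

variable {k l : ℤ → ℤ}

/-- The defining relation `g_{n-1}^{k n} = g_n^{l n}` holds in `G̃`. -/
lemma ggrel (k l : ℤ → ℤ) (n : ℤ) : gg k l (n - 1) ^ (k n) = gg k l n ^ (l n) := by
  have hr : (FreeGroup.of (n - 1) ^ k n * FreeGroup.of n ^ (-(l n))) ∈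
      Subgroup.normalClosure (dehornoyRels k l) :=
    Subgroup.subset_normalClosure ⟨n, rfl⟩
  have h1 : PresentedGroup.mk (dehornoyRels k l)
      (FreeGroup.of (n - 1) ^ k n * FreeGroup.of n ^ (-(l n))) = 1 :=
    (QuotientGroup.eq_one_iff _).mpr hr
  rw [map_mul, map_zpow, map_zpow, zpow_neg] at h1
  exact mul_inv_eq_one.mp h1

/-- The tail `g_j^{-(k(j+1)-1)} ⋯ g_{i-1}^{-(k i - 1)} * g_i` of `a_{i,m}`. -/
def DD (k l : ℤ → ℤ) (j i : ℤ) : Gtil k l :=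
  (((List.range (i - j).toNat).map
      (fun t : ℕ => gg k l (j + (t : ℤ)) ^ (-(k (j + (t : ℤ) + 1) - 1)))).prod) * gg k l i

lemma flatMap_cast (L : List ℕ) : (L.flatMap fun a : ℕ => [(a : ℤ)]) = L.map Nat.cast := by
  induction L with
  | nil => rfl
  | cons a L ih => simp [ih]

lemma aElt_eq_DD (k l : ℤ → ℤ) (i m : ℤ) : aElt k l i m = DD k l (-m) i := by
  unfold aElt DD
  rw [sub_neg_eq_add]
  congr 1
  simp only [List.pure_def, List.bind_eq_flatMap, flatMap_cast, List.map_map]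
  rfl

lemma DD_self (k l : ℤ → ℤ) (i : ℤ) : DD k l i i = gg k l i := by
  unfold DD
  simp

lemma DD_head (k l : ℤ → ℤ) {j i : ℤ} (h : j < i) :
    DD k l j i = gg k l j ^ (-(k (j + 1) - 1)) * DD k l (j + 1) i := by
  unfold DD
  have h1 : (i - j).toNat = (i - (j + 1)).toNat + 1 := by omega
  rw [h1, List.range_succ_eq_map, List.map_cons, List.prod_cons, List.map_map, mul_assoc]
  congr 1
  · norm_num
  congr 1
  refine congrArg List.prod (List.map_congr_left ?_)
  intro t _
  simp only [Function.comp_apply]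
  have e : j + ((Nat.succ t : ℕ) : ℤ) = j + 1 + (t : ℤ) := by push_cast; ring
  rw [e]

lemma DD_tail (k l : ℤ → ℤ) {j i : ℤ} (h : j ≤ i) :
    DD k l j (i + 1) = DD k l j i * gg k l (i + 1) ^ (1 - l (i + 1)) := by
  have hr := ggrel k l (i + 1)
  rw [show (i + 1 - 1 : ℤ) = i by ring] at hr
  have key : gg k l i ^ (-(k (i + 1) - 1)) * gg k l (i + 1)
      = gg k l i * gg k l (i + 1) ^ (1 - l (i + 1)) := by
    have e1 : (-(k (i + 1) - 1)) = 1 + (-(k (i + 1))) := by ring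
    have e2 : (1 - l (i + 1)) = (-(l (i + 1))) + 1 := by ring
    rw [e1, e2, zpow_add, zpow_add, zpow_one, zpow_one, zpow_neg, zpow_neg, hr, mul_assoc]
  unfold DD
  have h1 : (i + 1 - j).toNat = (i - j).toNat + 1 := by omega
  have h2 : (((i - j).toNat : ℕ) : ℤ) = i - j := by omega
  rw [h1, List.range_succ, List.map_append, List.prod_append, List.map_singleton,
    List.prod_singleton, h2]
  rw [show j + (i - j) = i by ring]
  rw [mul_assoc, key, ← mul_assoc]

/-- `D (j+1) i` is obtained from `D j i` by multiplying by a positive power on the left. -/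
lemma DD_head' (k l : ℤ → ℤ) {j i : ℤ} (h : j < i) :
    DD k l (j + 1) i = gg k l j ^ (k (j + 1) - 1) * DD k l j i := by
  rw [DD_head k l h, ← mul_assoc, ← zpow_add,
    show (k (j + 1) - 1) + (-(k (j + 1) - 1)) = 0 by ring, zpow_zero, one_mul]

/-! ### Membership lemmas -/

lemma mul_mem_P {x y : Gtil k l} (hx : x ∈ Ptil k l) (hy : y ∈ Ptil k l) :
    x * y ∈ Ptil k l := Subsemigroup.mul_mem _ hx hy

lemma gen_mem_P {i m : ℤ} (hm : 0 ≤ m) (h1 : -m ≤ i) (h2 : i ≤ m) :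
    aElt k l i m ∈ Ptil k l :=
  Subsemigroup.subset_closure ⟨m, i, hm, h1, h2, rfl⟩

lemma zpow_mem_P {x : Gtil k l} (hx : x ∈ Ptil k l) {s : ℤ} (hs : 1 ≤ s) :
    x ^ s ∈ Ptil k l := by
  have h : ∀ n : ℕ, x ^ (n + 1) ∈ Ptil k l := by
    intro n
    induction n with
    | zero => simpa using hx
    | succ n ih => rw [pow_succ]; exact mul_mem_P ih hx
  have hs' : s = (((s - 1).toNat + 1 : ℕ) : ℤ) := by omega
  rw [hs', zpow_natCast]
  exact h _

lemma opt_mul_mem_P {w x : Gtil k l} (hw : w ∈ Ptil k l ∨ w = 1) (hx : x ∈ Ptil k l) :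
    w * x ∈ Ptil k l := by
  rcases hw with hw | rfl
  · exact mul_mem_P hw hx
  · simpa using hx

lemma mul_opt_mem_P {w x : Gtil k l} (hx : x ∈ Ptil k l) (hw : w ∈ Ptil k l ∨ w = 1) :
    x * w ∈ Ptil k l := by
  rcases hw with hw | rfl
  · exact mul_mem_P hx hw
  · simpa using hx

lemma zpow_opt_mem_P {x : Gtil k l} (hx : x ∈ Ptil k l) {s : ℤ} (hs : 0 ≤ s) :
    x ^ s ∈ Ptil k l ∨ x ^ s = 1 := by
  rcases eq_or_lt_of_le hs with h | h
  · right; rw [← h, zpow_zero]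
  · left; exact zpow_mem_P hx h

/-- `g_n ∈ P̃` for `n ≤ 0`, since `g_{-m} = a_{-m,m}`. -/
lemma gg_mem_P_of_nonpos {n : ℤ} (hn : n ≤ 0) : gg k l n ∈ Ptil k l := by
  have h : aElt k l n (-n) = gg k l n := by
    rw [aElt_eq_DD, neg_neg, DD_self]
  rw [← h]
  exact gen_mem_P (by omega) (by omega) (by omega)

/-- `D j i ∈ P̃` given that the generators strictly below `j` (and above `-m`) are in `P̃`. -/
lemma DD_mem_P_aux (hk : ∀ n : ℤ, 2 ≤ k n) :
    ∀ c : ℕ, ∀ m i : ℤ, 0 ≤ m → -m ≤ i → i ≤ m → -m + c ≤ i →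
      (∀ t : ℤ, -m ≤ t → t < -m + c → gg k l t ∈ Ptil k l) →
      DD k l (-m + c) i ∈ Ptil k l := by
  intro c
  induction c with
  | zero =>
    intro m i hm h1 h2 _ _
    have h : DD k l (-m + ((0 : ℕ) : ℤ)) i = aElt k l i m := by
      rw [aElt_eq_DD]
      norm_num
    rw [h]
    exact gen_mem_P hm h1 h2
  | succ c ih =>
    intro m i hm h1 h2 h3 hg
    have hc : (-m + ((c + 1 : ℕ) : ℤ)) = (-m + c) + 1 := by push_cast; ring
    have hlt : -m + (c : ℤ) < i := by push_cast at h3; omega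
    rw [hc, DD_head' k l hlt]
    refine mul_mem_P (zpow_mem_P ?_ ?_) ?_
    · exact hg _ (by omega) (by push_cast; omega)
    · have := hk (-m + (c : ℤ) + 1); omega
    · exact ih m i hm h1 h2 (le_of_lt hlt) (fun t ht1 ht2 => hg t ht1 (by push_cast; omega))

/-- `g_{n+1}` in terms of `g_n` and the tail `D n (n+1)`. -/
lemma gg_succ (k l : ℤ → ℤ) (n : ℤ) :
    gg k l (n + 1) = gg k l n ^ (k (n + 1) - 1) * DD k l n (n + 1) := by
  have h := DD_head' k l (show n < n + 1 by omega)
  rw [DD_self] at h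
  exact h

/-- All generators `g_n` lie in `P̃`. -/
lemma gg_mem_P (hk : ∀ n : ℤ, 2 ≤ k n) : ∀ n : ℤ, gg k l n ∈ Ptil k l := by
  have main : ∀ N : ℕ, ∀ n : ℤ, n ≤ (N : ℤ) → gg k l n ∈ Ptil k l := by
    intro N
    induction N with
    | zero => intro n hn; exact gg_mem_P_of_nonpos (by exact_mod_cast hn)
    | succ N ih =>
      intro n hn
      rcases le_or_gt n (N : ℤ) with h | h
      · exact ih n h
      · have hn' : n = (N : ℤ) + 1 := by push_cast at hn; omega
        subst hn'
        rw [gg_succ]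
        refine mul_mem_P (zpow_mem_P (ih N le_rfl) ?_) ?_
        · have := hk ((N : ℤ) + 1); omega
        · have hD := DD_mem_P_aux hk (2 * N + 1) ((N : ℤ) + 1) ((N : ℤ) + 1)
            (by omega) (by omega) le_rfl (by push_cast; omega)
            (fun t ht1 ht2 => ih t (by push_cast at ht2; omega))
          have he : (-(((N : ℤ)) + 1) + ((2 * N + 1 : ℕ) : ℤ)) = (N : ℤ) := by
            push_cast; ring
          rwa [he] at hD
  intro n
  rcases le_or_gt n 0 with h | h
  · exact gg_mem_P_of_nonpos h
  · exact main n.toNat n (by omega)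

/-- The tails `D j i` all lie in `P̃`. -/
lemma DD_mem_P (hk : ∀ n : ℤ, 2 ≤ k n) {j i : ℤ} (h : j ≤ i) :
    DD k l j i ∈ Ptil k l := by
  have hi : i ≤ |i| := le_abs_self i
  have hi' : 0 ≤ |i| := abs_nonneg i
  have hj : -|j| ≤ j := neg_abs_le j
  have hj' : 0 ≤ |j| := abs_nonneg j
  set m : ℤ := |i| + |j| with hm
  have hD := DD_mem_P_aux (k := k) (l := l) hk (j + m).toNat m i (by omega) (by omega)
    (by omega) (by omega) (fun t _ _ => gg_mem_P hk t)
  have he : (-m + (((j + m).toNat : ℕ) : ℤ)) = j := by omega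
  rwa [he] at hD

/-- Key conjugation identity:
`g_j^s ⬝ D j i = D j i ⬝ (w ⬝ (g_j^{s-1} ⬝ D j i))` with `w` positive or trivial. -/
lemma key_identity (hk : ∀ n : ℤ, 2 ≤ k n) (hl : ∀ n : ℤ, 2 ≤ l n) :
    ∀ c : ℕ, ∀ j s : ℤ,
      ∃ w : Gtil k l, (w ∈ Ptil k l ∨ w = 1) ∧
        gg k l j ^ s * DD k l j (j + c) =
          DD k l j (j + c) * (w * (gg k l j ^ (s - 1) * DD k l j (j + c))) := by
  intro c
  induction c with
  | zero =>
    intro j s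
    refine ⟨1, Or.inr rfl, ?_⟩
    rw [show (j + ((0 : ℕ) : ℤ)) = j by push_cast; ring, DD_self, one_mul,
      ← zpow_add_one, ← mul_assoc, ← zpow_one_add, ← zpow_add_one]
    congr 1
    ring
  | succ c ih =>
    intro j s
    obtain ⟨w, hw, hid⟩ := ih j s
    set i : ℤ := j + (c : ℤ) with hi
    have hc : (j + ((c + 1 : ℕ) : ℤ)) = i + 1 := by push_cast; ring
    have hD : DD k l j (i + 1) = DD k l j i * gg k l (i + 1) ^ (1 - l (i + 1)) :=
      DD_tail k l (by omega)
    refine ⟨gg k l (i + 1) ^ (l (i + 1) - 1) * w, ?_, ?_⟩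
    · left
      exact mul_opt_mem_P
        (zpow_mem_P (gg_mem_P hk (i + 1)) (by have := hl (i + 1); omega)) hw
    · rw [hc, hD]
      have hGX : gg k l (i + 1) ^ (l (i + 1) - 1)
          = (gg k l (i + 1) ^ (1 - l (i + 1)))⁻¹ := by
        rw [← zpow_neg]
        congr 1
        ring
      rw [hGX]
      conv_lhs => rw [← mul_assoc, hid]
      simp only [mul_assoc]
      congr 1
      rw [mul_inv_cancel_left]

end DehornoyAux

open DehornoyAux in
theorem stmt13 (k l : ℤ → ℤ) (hk : ∀ n : ℤ, 2 ≤ k n) (hl : ∀ n : ℤ, 2 ≤ l n) :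
    -- (i) `1 < gₙ < g_{n+1}`
    (∀ n : ℤ, gg k l n ∈ Ptil k l ∧ (gg k l n)⁻¹ * gg k l (n + 1) ∈ Ptil k l) ∧
    -- (ii) `a_{i+1,m} < a_{i,m}`
    (∀ m : ℤ, 0 ≤ m → ∀ i : ℤ, -m ≤ i → i ≤ m - 1 →
      (aElt k l (i + 1) m)⁻¹ * aElt k l i m ∈ Ptil k l) ∧
    -- (iii) `a_{i,m+1} < a_{i,m}`
    (∀ m : ℤ, 0 ≤ m → ∀ i : ℤ, -m ≤ i → i ≤ m →
      (aElt k l i (m + 1))⁻¹ * aElt k l i m ∈ Ptil k l) := by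
  refine ⟨?_, ?_, ?_⟩
  · -- (i)
    intro n
    refine ⟨gg_mem_P hk n, ?_⟩
    rw [gg_succ k l n, ← mul_assoc]
    have h : (gg k l n)⁻¹ * gg k l n ^ (k (n + 1) - 1) = gg k l n ^ (k (n + 1) - 2) := by
      rw [← zpow_neg_one, ← zpow_add]
      congr 1
      ring
    rw [h]
    exact opt_mul_mem_P
      (zpow_opt_mem_P (gg_mem_P hk n) (by have := hk (n + 1); omega))
      (DD_mem_P hk (by omega))
  · -- (ii)
    intro m hm i h1 h2
    rw [aElt_eq_DD k l (i + 1) m, aElt_eq_DD k l i m, DD_tail k l h1, mul_inv_rev,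
      mul_assoc, inv_mul_cancel, mul_one, ← zpow_neg,
      show (-(1 - l (i + 1))) = l (i + 1) - 1 by ring]
    exact zpow_mem_P (gg_mem_P hk (i + 1)) (by have := hl (i + 1); omega)
  · -- (iii)
    intro m hm i h1 h2
    -- `a_{i,m} = g_{-(m+1)}^{k(-m)-1} * a_{i,m+1}`
    have hhead : aElt k l i (m + 1)
        = gg k l (-(m + 1)) ^ (-(k (-m) - 1)) * aElt k l i m := by
      rw [aElt_eq_DD k l i (m + 1), aElt_eq_DD k l i m,
        DD_head k l (show -(m + 1) < i by omega),
        show (-(m + 1) + 1 : ℤ) = -m by ring]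
    have hrec : aElt k l i m = gg k l (-(m + 1)) ^ (k (-m) - 1) * aElt k l i (m + 1) := by
      rw [hhead, ← mul_assoc, ← zpow_add,
        show (k (-m) - 1) + (-(k (-m) - 1)) = 0 by ring, zpow_zero, one_mul]
    obtain ⟨w, hw, hid⟩ := key_identity hk hl (i + m + 1).toNat (-(m + 1)) (k (-m) - 1)
    have he : (-(m + 1) + (((i + m + 1).toNat : ℕ) : ℤ)) = i := by omega
    rw [he, ← aElt_eq_DD k l i (m + 1)] at hid
    rw [hrec, hid, inv_mul_cancel_left]
    refine opt_mul_mem_P hw (opt_mul_mem_P ?_ ?_)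
    · exact zpow_opt_mem_P (gg_mem_P hk (-(m + 1))) (by have := hk (-m); omega)
    · exact gen_mem_P (by omega) (by omega) (by omega)
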